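/- Fix d ≥ 1 and a finite set Λ. Suppose μ assigns to every density matrix ρ on ℂ^d a probability distribution μ(ρ) : Λ → [0,1] and is convex-linear: μ(tρ + (1−t)σ) = t·μ(ρ) + (1−t)·μ(σ) for all t ∈ [0,1] (preparation noncontextuality). Let Q be an orthogonal projector on ℂ^d and let ξ, ξ' : Λ → {0,1} be two outcome-deterministic response functions (outcome determinism for sharp measurements being guaranteed by preparation noncontextuality) that both reproduce the statistics of Q: Σ_{λ∈Λ} ξ(λ)·μ(ρ)(λ) = Tr(Qρ) = Σ_{λ∈Λ} ξ'(λ)·μ(ρ)(λ) for every density matrix ρ. Then ξ(λ) = ξ'(λ) for every λ ∈ Λ such that μ(ρ)(λ) > 0 for some density matrix ρ. (Preparation noncontextuality implies KS-noncontextuality: operationally equivalent sharp binary measurements receive identical deterministic response functions.) -/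

import Mathlib

open scoped BigOperators ComplexOrder
open Matrix

lemma PNC.trace_nonneg {d : ℕ} {A : Matrix (Fin d) (Fin d) ℂ} (hA : A.PosSemidef) :
    0 ≤ A.trace := by
  rw [Matrix.trace]
  apply Finset.sum_nonneg
  intro i _
  have := hA.dotProduct_mulVec_nonneg (Pi.single i 1)
  simpa [Matrix.mulVec_single, dotProduct, Pi.single_apply, Matrix.diag,
    Finset.sum_ite_eq] using this

lemma PNC.rsmul_eq {d : ℕ} (c : ℝ) (A : Matrix (Fin d) (Fin d) ℂ) :
    c • A = ((c : ℂ)) • A := by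
  ext i j
  simp [Matrix.smul_apply, Complex.real_smul]

lemma PNC.quadform_le_trace {d : ℕ} {ρ : Matrix (Fin d) (Fin d) ℂ} (hρ : ρ.PosSemidef)
    (x : Fin d → ℂ) :
    dotProduct (star x) (ρ *ᵥ x) ≤ ρ.trace * dotProduct (star x) x := by
  obtain ⟨B, rfl⟩ : ∃ B : Matrix (Fin d) (Fin d) ℂ, ρ = Bᴴ * B := by
    open scoped MatrixOrder in
    obtain ⟨B, hB⟩ := CStarAlgebra.nonneg_iff_eq_star_mul_self.mp hρ.nonneg
    exact ⟨B, hB⟩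
  rw [← Matrix.mulVec_mulVec, Matrix.dotProduct_mulVec, Matrix.vecMul_conjTranspose, star_star]
  have hy : dotProduct (star (B *ᵥ x)) (B *ᵥ x)
      = ((∑ i, Complex.normSq ((B *ᵥ x) i) : ℝ) : ℂ) := by
    simp [dotProduct, Complex.normSq_eq_conj_mul_self]
  have htr : (Bᴴ * B).trace = ((∑ j, ∑ i, Complex.normSq (B i j) : ℝ) : ℂ) := by
    simp [Matrix.trace, Matrix.diag, Matrix.mul_apply, Complex.normSq_eq_conj_mul_self]
  have hx : dotProduct (star x) x = ((∑ j, Complex.normSq (x j) : ℝ) : ℂ) := by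
    simp [dotProduct, Complex.normSq_eq_conj_mul_self]
  rw [hy, htr, hx, ← Complex.ofReal_mul, Complex.real_le_real]
  rw [Finset.sum_comm, Finset.sum_mul]
  apply Finset.sum_le_sum
  intro i _
  have hBi : (B *ᵥ x) i = ∑ j, B i j * x j := rfl
  have h1 : ‖(B *ᵥ x) i‖ ≤ ∑ j, ‖B i j‖ * ‖x j‖ := by
    rw [hBi]
    refine (norm_sum_le Finset.univ fun j => B i j * x j).trans (le_of_eq ?_)
    simp [norm_mul]
  have h2 := Finset.sum_mul_sq_le_sq_mul_sq Finset.univ (fun j => ‖B i j‖) (fun j => ‖x j‖)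
  calc Complex.normSq ((B *ᵥ x) i) = ‖(B *ᵥ x) i‖ ^ 2 := by
        rw [Complex.normSq_eq_norm_sq]
    _ ≤ (∑ j, ‖B i j‖ * ‖x j‖) ^ 2 := by
        exact pow_le_pow_left₀ (norm_nonneg _) h1 2
    _ ≤ (∑ j, ‖B i j‖ ^ 2) * (∑ j, ‖x j‖ ^ 2) := h2
    _ = (∑ j, Complex.normSq (B i j)) * (∑ j, Complex.normSq (x j)) := by
        simp [Complex.normSq_eq_norm_sq]

lemma PNC.smul_psd {d : ℕ} {A : Matrix (Fin d) (Fin d) ℂ} (hA : A.PosSemidef) {c : ℝ}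
    (hc : 0 ≤ c) : ((c : ℝ) • A).PosSemidef := by
  rw [PNC.rsmul_eq]
  rw [Matrix.posSemidef_iff_dotProduct_mulVec]
  constructor
  · have h1 : Aᴴ = A := hA.1
    show ((c:ℂ) • A)ᴴ = (c:ℂ) • A
    rw [Matrix.conjTranspose_smul, h1]
    congr 1
    simp [Complex.star_def, Complex.conj_ofReal]
  · intro x
    rw [Matrix.smul_mulVec, dotProduct_smul, smul_eq_mul]
    exact mul_nonneg (Complex.zero_le_real.mpr hc) (hA.dotProduct_mulVec_nonneg x)

lemma PNC.sum_one_forces {Λ : Type*} [Fintype Λ] {a b : Λ → ℝ} (ha : ∀ l, 0 ≤ a l)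
    (hb : ∀ l, b l = 0 ∨ b l = 1) (hsum : ∑ l, a l = 1) (h : ∑ l, b l * a l = 1) :
    ∀ l, 0 < a l → b l = 1 := by
  intro l hl
  have h0 : ∑ l', (1 - b l') * a l' = 0 := by
    simp only [sub_mul, one_mul, Finset.sum_sub_distrib, hsum, h, sub_self]
  have hnn : ∀ l' ∈ Finset.univ, 0 ≤ (1 - b l') * a l' := by
    intro l' _
    apply mul_nonneg _ (ha l')
    rcases hb l' with h'|h' <;> simp [h']
  have := (Finset.sum_eq_zero_iff_of_nonneg hnn).mp h0 l (Finset.mem_univ l)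
  rcases mul_eq_zero.mp this with h'|h'
  · linarith
  · exact absurd h' (ne_of_gt hl)

lemma PNC.sum_zero_forces {Λ : Type*} [Fintype Λ] {a b : Λ → ℝ} (ha : ∀ l, 0 ≤ a l)
    (hb : ∀ l, b l = 0 ∨ b l = 1) (h : ∑ l, b l * a l = 0) :
    ∀ l, 0 < a l → b l = 0 := by
  intro l hl
  have hnn : ∀ l' ∈ Finset.univ, 0 ≤ b l' * a l' := by
    intro l' _
    apply mul_nonneg _ (ha l')
    rcases hb l' with h'|h' <;> simp [h']
  have := (Finset.sum_eq_zero_iff_of_nonneg hnn).mp h l (Finset.mem_univ l)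
  rcases mul_eq_zero.mp this with h'|h'
  · exact h'
  · exact absurd h' (ne_of_gt hl)

/-- **Preparation noncontextuality implies KS-noncontextuality.** Given a convex-linear
(preparation-noncontextual) assignment `μ` of finite probability distributions to density
matrices on `ℂ^d`, a projector `Q`, and two outcome-deterministic response functions `ξ, ξ'`
that both reproduce the Born statistics `Tr(Qρ)` for all density matrices `ρ`, the two
response functions agree on every ontic state in the support of some quantum state. -/
theorem preparation_noncontextuality_implies_KS_noncontextuality
    (d : ℕ) (hd : 1 ≤ d) (Λ : Type*) [Fintype Λ]
    (μ : Matrix (Fin d) (Fin d) ℂ → Λ → ℝ)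
    (hμprob : ∀ ρ : Matrix (Fin d) (Fin d) ℂ, ρ.PosSemidef → ρ.trace = 1 →
      (∀ l, 0 ≤ μ ρ l) ∧ ∑ l, μ ρ l = 1)
    (hμconv : ∀ ρ σ : Matrix (Fin d) (Fin d) ℂ, ρ.PosSemidef → ρ.trace = 1 →
      σ.PosSemidef → σ.trace = 1 → ∀ t : ℝ, 0 ≤ t → t ≤ 1 →
      ∀ l, μ (t • ρ + (1 - t) • σ) l = t * μ ρ l + (1 - t) * μ σ l)
    (Q : Matrix (Fin d) (Fin d) ℂ) (hQherm : Q.IsHermitian) (hQidem : Q * Q = Q)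
    (ξ ξ' : Λ → ℝ)
    (hξdet : ∀ l, ξ l = 0 ∨ ξ l = 1) (hξ'det : ∀ l, ξ' l = 0 ∨ ξ' l = 1)
    (hborn : ∀ ρ : Matrix (Fin d) (Fin d) ℂ, ρ.PosSemidef → ρ.trace = 1 →
      ((∑ l, ξ l * μ ρ l : ℝ) : ℂ) = (Q * ρ).trace)
    (hborn' : ∀ ρ : Matrix (Fin d) (Fin d) ℂ, ρ.PosSemidef → ρ.trace = 1 →
      ((∑ l, ξ' l * μ ρ l : ℝ) : ℂ) = (Q * ρ).trace) :
    ∀ l, (∃ ρ : Matrix (Fin d) (Fin d) ℂ, ρ.PosSemidef ∧ ρ.trace = 1 ∧ 0 < μ ρ l) →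
      ξ l = ξ' l := by
  intro l ⟨ρ, hρpsd, hρtr, hρl⟩
  have hd0 : (0:ℝ) < (d:ℝ) := by exact_mod_cast hd
  have hdC : ((d:ℝ):ℂ) ≠ 0 := by exact_mod_cast hd0.ne'
  -- Q is PSD, P := 1 - Q is PSD
  have hQe : Qᴴ = Q := hQherm
  have hQpsd : Q.PosSemidef := by
    have h := Matrix.posSemidef_conjTranspose_mul_self Q
    rwa [hQe, hQidem] at h
  set P : Matrix (Fin d) (Fin d) ℂ := 1 - Q with hPdef
  have hPe : Pᴴ = P := by
    simp [hPdef, Matrix.conjTranspose_sub, hQe]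
  have hQP : Q * P = 0 := by
    simp [hPdef, Matrix.mul_sub, hQidem]
  have hPidem : P * P = P := by
    simp [hPdef, Matrix.mul_sub, Matrix.sub_mul, hQidem]
  have hPpsd : P.PosSemidef := by
    have h := Matrix.posSemidef_conjTranspose_mul_self P
    rwa [hPe, hPidem] at h
  -- traces are real
  obtain ⟨c, hc0, hcQ⟩ : ∃ c : ℝ, 0 ≤ c ∧ Q.trace = (c:ℂ) := by
    have h := PNC.trace_nonneg hQpsd
    rw [Complex.nonneg_iff] at h
    refine ⟨Q.trace.re, h.1, ?_⟩
    rw [← Complex.re_add_im Q.trace, ← h.2]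
    simp
  have hPtr : P.trace = ((d - c : ℝ):ℂ) := by
    simp [hPdef, Matrix.trace_sub, Matrix.trace_one, hcQ]
  have hcd : c ≤ (d:ℝ) := by
    have h := PNC.trace_nonneg hPpsd
    rw [hPtr, Complex.zero_le_real] at h
    linarith
  -- the maximally mixed state
  set ρm : Matrix (Fin d) (Fin d) ℂ := ((d:ℝ)⁻¹) • (1 : Matrix (Fin d) (Fin d) ℂ) with hρmdef
  have hρm_tr : ρm.trace = 1 := by
    rw [hρmdef, PNC.rsmul_eq, Matrix.trace_smul, Matrix.trace_one, smul_eq_mul]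
    push_cast
    field_simp
    simp
  have hρm_psd : ρm.PosSemidef := by
    rw [hρmdef]
    exact PNC.smul_psd Matrix.PosSemidef.one (by positivity)
  -- step 1 : μ ρm l > 0
  have hmix : 0 < μ ρm l := by
    set t : ℝ := (2 * d)⁻¹ with htdef
    have ht0 : 0 < t := by positivity
    have htd : t ≤ (d:ℝ)⁻¹ := by
      rw [htdef]
      apply inv_anti₀ hd0
      linarith
    have ht1 : t < 1 := by
      rw [htdef]
      have h1d : (1:ℝ) ≤ (d:ℝ) := by exact_mod_cast hd
      have h2d : (1:ℝ) < 2*d := by linarith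
      exact inv_lt_one_of_one_lt₀ h2d
    have h1t : (0:ℝ) < 1 - t := by linarith
    have hA : ρm - t • ρ = (((d:ℝ)⁻¹ : ℝ) : ℂ) • (1 : Matrix (Fin d) (Fin d) ℂ)
        - ((t : ℝ) : ℂ) • ρ := by
      rw [hρmdef, PNC.rsmul_eq, PNC.rsmul_eq]
    have hApsd : (ρm - t • ρ).PosSemidef := by
      rw [hA]
      rw [Matrix.posSemidef_iff_dotProduct_mulVec]
      constructor
      · show _ᴴ = _
        rw [Matrix.conjTranspose_sub, Matrix.conjTranspose_smul, Matrix.conjTranspose_smul,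
          Matrix.conjTranspose_one, (hρpsd.1 : ρᴴ = ρ)]
        congr 1 <;> simp [Complex.star_def, Complex.conj_ofReal]
      · intro x
        rw [Matrix.sub_mulVec, dotProduct_sub, sub_nonneg,
          Matrix.smul_mulVec, Matrix.smul_mulVec, Matrix.one_mulVec,
          dotProduct_smul, dotProduct_smul, smul_eq_mul, smul_eq_mul]
        have h1 := PNC.quadform_le_trace hρpsd x
        rw [hρtr, one_mul] at h1
        have hxx : 0 ≤ dotProduct (star x) x := dotProduct_star_self_nonneg x
        calc ((t:ℝ):ℂ) * dotProduct (star x) (ρ *ᵥ x)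
            ≤ ((t:ℝ):ℂ) * dotProduct (star x) x :=
              mul_le_mul_of_nonneg_left h1 (Complex.zero_le_real.mpr ht0.le)
          _ ≤ (((d:ℝ)⁻¹ : ℝ):ℂ) * dotProduct (star x) x :=
              mul_le_mul_of_nonneg_right (Complex.real_le_real.mpr htd) hxx
    have hAtr : (ρm - t • ρ).trace = ((1 - t : ℝ) : ℂ) := by
      rw [Matrix.trace_sub, hρm_tr, Matrix.trace_smul, hρtr]
      push_cast
      rw [Complex.real_smul]
      ring
    set σ0 := (1 - t)⁻¹ • (ρm - t • ρ) with hσ0def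
    have hσ0psd : σ0.PosSemidef := PNC.smul_psd hApsd (by positivity)
    have hσ0tr : σ0.trace = 1 := by
      rw [hσ0def, PNC.rsmul_eq, Matrix.trace_smul, hAtr, smul_eq_mul, ← Complex.ofReal_mul]
      rw [inv_mul_cancel₀ h1t.ne']
      norm_num
    have heq : t • ρ + (1 - t) • σ0 = ρm := by
      rw [hσ0def, smul_smul, mul_inv_cancel₀ h1t.ne', one_smul]
      abel
    have hconv := hμconv ρ σ0 hρpsd hρtr hσ0psd hσ0tr t ht0.le ht1.le l
    rw [heq] at hconv
    rw [hconv]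
    have hσ0nn := (hμprob σ0 hσ0psd hσ0tr).1 l
    nlinarith
  -- Born statistics on ρm
  have htrQρm : (Q * ρm).trace = ((c / d : ℝ) : ℂ) := by
    rw [hρmdef, Matrix.mul_smul, Matrix.mul_one, Matrix.trace_smul, hcQ]
    rw [Complex.real_smul]
    push_cast
    ring
  have hbρm : ∑ l', ξ l' * μ ρm l' = c / d :=
    Complex.ofReal_inj.mp ((hborn ρm hρm_psd hρm_tr).trans htrQρm)
  have hbρm' : ∑ l', ξ' l' * μ ρm l' = c / d :=
    Complex.ofReal_inj.mp ((hborn' ρm hρm_psd hρm_tr).trans htrQρm)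
  rcases eq_or_lt_of_le hc0 with hc|hc
  · -- c = 0 : born prob 0 on ρm
    have h0 : ∑ l', ξ l' * μ ρm l' = 0 := by rw [hbρm, ← hc]; simp
    have h0' : ∑ l', ξ' l' * μ ρm l' = 0 := by rw [hbρm', ← hc]; simp
    rw [PNC.sum_zero_forces (hμprob ρm hρm_psd hρm_tr).1 hξdet h0 l hmix,
      PNC.sum_zero_forces (hμprob ρm hρm_psd hρm_tr).1 hξ'det h0' l hmix]
  rcases eq_or_lt_of_le hcd with hc'|hc'
  · -- c = d : born prob 1 on ρm
    have h1 : ∑ l', ξ l' * μ ρm l' = 1 := by rw [hbρm, hc']; field_simp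
    have h1' : ∑ l', ξ' l' * μ ρm l' = 1 := by rw [hbρm', hc']; field_simp
    rw [PNC.sum_one_forces (hμprob ρm hρm_psd hρm_tr).1 hξdet (hμprob ρm hρm_psd hρm_tr).2 h1 l hmix,
      PNC.sum_one_forces (hμprob ρm hρm_psd hρm_tr).1 hξ'det (hμprob ρm hρm_psd hρm_tr).2 h1' l hmix]
  -- 0 < c < d : decompose ρm into states supported on Q and on P
  have hcne : c ≠ 0 := hc.ne'
  have hdcpos : 0 < (d:ℝ) - c := by linarith
  set σQ := c⁻¹ • Q with hσQdef
  set σP := ((d:ℝ) - c)⁻¹ • P with hσPdef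
  have hσQpsd : σQ.PosSemidef := PNC.smul_psd hQpsd (by positivity)
  have hσPpsd : σP.PosSemidef := PNC.smul_psd hPpsd (by positivity)
  have hσQtr : σQ.trace = 1 := by
    rw [hσQdef, PNC.rsmul_eq, Matrix.trace_smul, hcQ, smul_eq_mul, ← Complex.ofReal_mul,
      inv_mul_cancel₀ hcne]
    norm_num
  have hσPtr : σP.trace = 1 := by
    rw [hσPdef, PNC.rsmul_eq, Matrix.trace_smul, hPtr, smul_eq_mul, ← Complex.ofReal_mul,
      inv_mul_cancel₀ hdcpos.ne']
    norm_num
  have hQσQ : (Q * σQ).trace = ((1:ℝ):ℂ) := by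
    rw [hσQdef, Matrix.mul_smul, hQidem, Matrix.trace_smul, hcQ, Complex.real_smul,
      ← Complex.ofReal_mul, inv_mul_cancel₀ hcne]
  have hQσP : (Q * σP).trace = ((0:ℝ):ℂ) := by
    rw [hσPdef, Matrix.mul_smul, hQP, smul_zero, Matrix.trace_zero]
    norm_num
  have hdecomp : (c/(d:ℝ)) • σQ + (1 - c/(d:ℝ)) • σP = ρm := by
    rw [hσQdef, hσPdef, smul_smul, smul_smul, hρmdef]
    have e1 : c/(d:ℝ) * c⁻¹ = (d:ℝ)⁻¹ := by field_simp
    have e2 : (1 - c/(d:ℝ)) * ((d:ℝ)-c)⁻¹ = (d:ℝ)⁻¹ := by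
      field_simp
    rw [e1, e2, ← smul_add, hPdef, add_sub_cancel]
  have hs0 : 0 ≤ c/(d:ℝ) := by positivity
  have hs1 : c/(d:ℝ) ≤ 1 := by rw [div_le_one hd0]; exact hcd
  have hcombo := hμconv σQ σP hσQpsd hσQtr hσPpsd hσPtr _ hs0 hs1 l
  rw [hdecomp] at hcombo
  have hQnn := (hμprob σQ hσQpsd hσQtr).1
  have hPnn := (hμprob σP hσPpsd hσPtr).1
  have hpos : 0 < μ σQ l ∨ 0 < μ σP l := by
    by_contra hcon
    push_neg at hcon
    have h1 : μ σQ l = 0 := le_antisymm hcon.1 (hQnn l)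
    have h2 : μ σP l = 0 := le_antisymm hcon.2 (hPnn l)
    rw [hcombo, h1, h2] at hmix
    simp at hmix
  rcases hpos with h|h
  · have hb1 : ∑ l', ξ l' * μ σQ l' = 1 :=
      Complex.ofReal_inj.mp ((hborn σQ hσQpsd hσQtr).trans hQσQ)
    have hb1' : ∑ l', ξ' l' * μ σQ l' = 1 :=
      Complex.ofReal_inj.mp ((hborn' σQ hσQpsd hσQtr).trans hQσQ)
    rw [PNC.sum_one_forces hQnn hξdet (hμprob σQ hσQpsd hσQtr).2 hb1 l h,
      PNC.sum_one_forces hQnn hξ'det (hμprob σQ hσQpsd hσQtr).2 hb1' l h]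
  · have hb0 : ∑ l', ξ l' * μ σP l' = 0 :=
      Complex.ofReal_inj.mp ((hborn σP hσPpsd hσPtr).trans hQσP)
    have hb0' : ∑ l', ξ' l' * μ σP l' = 0 :=
      Complex.ofReal_inj.mp ((hborn' σP hσPpsd hσPtr).trans hQσP)
    rw [PNC.sum_zero_forces hPnn hξdet hb0 l h,
      PNC.sum_zero_forces hPnn hξ'det hb0' l h]
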